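/- Let H_• be a subproduct system. The left shifts S_j and right shifts R_k on the Fock space H_ℕ satisfy the commutation relations [S_j, R_k] = 0 and [S_j*, R_k*] = 0 for all j, k ∈ {1,…,n}. -/

import Mathlib

open scoped Matrix

noncomputable section

/-- Words of length `m` in the alphabet `{1,…,n}`. -/
abbrev Wd (n m : ℕ) := Fin m → Fin n

/-- The `m`-th full tensor power `H^{⊗m}` of `H = ℂ^n`, realized as the Euclidean
space with orthonormal basis indexed by words of length `m`. -/
abbrev TP (n m : ℕ) : Type := EuclideanSpace ℂ (Wd n m)

variable {n : ℕ}

/-- Continuous linear map associated to a (possibly rectangular) matrix. -/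
def ofMatR {ι κ : Type} [Fintype ι] [Fintype κ] [DecidableEq ι] [DecidableEq κ]
    (M : Matrix ι κ ℂ) : EuclideanSpace ℂ κ →L[ℂ] EuclideanSpace ℂ ι :=
  LinearMap.toContinuousLinearMap (Matrix.toEuclideanLin M)

/-- Matrix entry of an operator in the standard basis. -/
def ent {a : ℕ} (A : TP n a →L[ℂ] TP n a) (w v : Wd n a) : ℂ :=
  A (EuclideanSpace.single v 1) w

def wfst {m k : ℕ} (w : Wd n (m + k)) : Wd n m := fun i => w (Fin.castAdd k i)
def wsnd {m k : ℕ} (w : Wd n (m + k)) : Wd n k := fun i => w (Fin.natAdd m i)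

/-- Tensor product of vectors, under the identification `H^{⊗m} ⊗ H^{⊗k} = H^{⊗(m+k)}`. -/
def tmul {m k : ℕ} (x : TP n m) (y : TP n k) : TP n (m + k) :=
  (WithLp.equiv 2 _).symm (fun w => x (wfst w) * y (wsnd w))

/-- Tensor product of subspaces `K ⊗ L ⊆ H^{⊗(m+k)}`. -/
def tensorSub {m k : ℕ} (K : Submodule ℂ (TP n m)) (L : Submodule ℂ (TP n k)) :
    Submodule ℂ (TP n (m + k)) :=
  Submodule.span ℂ {z | ∃ x ∈ K, ∃ y ∈ L, z = tmul x y}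

/-- Tensor product of operators, under `H^{⊗m} ⊗ H^{⊗k} = H^{⊗(m+k)}`. -/
def opT {m k : ℕ} (A : TP n m →L[ℂ] TP n m) (B : TP n k →L[ℂ] TP n k) :
    TP n (m + k) →L[ℂ] TP n (m + k) :=
  ofMatR (Matrix.of fun w v => ent A (wfst w) (wfst v) * ent B (wsnd w) (wsnd v))

/-- A subproduct system: `H_0 = ℂ` and `H_{m+k} ⊆ H_m ⊗ H_k`. -/
def IsSubproduct (H : ∀ m, Submodule ℂ (TP n m)) : Prop :=
  H 0 = ⊤ ∧ ∀ m k, H (m + k) ≤ tensorSub (H m) (H k)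

/-- The orthogonal projection `p_m : H^{⊗m} → H_m` (as an operator on `H^{⊗m}`). -/
def prj (H : ∀ m, Submodule ℂ (TP n m)) (m : ℕ) : TP n m →L[ℂ] TP n m :=
  (H m).subtypeL ∘L (H m).orthogonalProjectionOnto

/-- Left creation operator `x ↦ e_j ⊗ x`. -/
def lcreate (j : Fin n) (m : ℕ) : TP n m →L[ℂ] TP n (m + 1) :=
  ofMatR (Matrix.of fun (w : Wd n (m + 1)) (v : Wd n m) =>
    if w 0 = j ∧ (fun i : Fin m => w i.succ) = v then 1 else 0)

/-- Right creation operator `x ↦ x ⊗ e_j`. -/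
def rcreate (j : Fin n) (m : ℕ) : TP n m →L[ℂ] TP n (m + 1) :=
  ofMatR (Matrix.of fun (w : Wd n (m + 1)) (v : Wd n m) =>
    if w (Fin.last m) = j ∧ (fun i : Fin m => w i.castSucc) = v then 1 else 0)

/-- Graded component of the left shift `S_j : H_m → H_{m+1}`, `φ ↦ p_{m+1}(e_j ⊗ φ)`. -/
def lsh (H : ∀ m, Submodule ℂ (TP n m)) (j : Fin n) (m : ℕ) : TP n m →L[ℂ] TP n (m + 1) :=
  prj H (m + 1) ∘L lcreate j m ∘L prj H m

/-- Graded component of the right shift `R_j : H_m → H_{m+1}`, `φ ↦ p_{m+1}(φ ⊗ e_j)`. -/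
def rsh (H : ∀ m, Submodule ℂ (TP n m)) (j : Fin n) (m : ℕ) : TP n m →L[ℂ] TP n (m + 1) :=
  prj H (m + 1) ∘L rcreate j m ∘L prj H m

/-- Iterated left shift `S_r = S_{r_1} ⋯ S_{r_d}` as a map `H_m → H_{m+d}`. -/
def lshW (H : ∀ m, Submodule ℂ (TP n m)) (m : ℕ) :
    ∀ d, Wd n d → (TP n m →L[ℂ] TP n (m + d))
  | 0, _ => ContinuousLinearMap.id ℂ _
  | d + 1, r => lsh H (r 0) (m + d) ∘L lshW H m d (Fin.tail r)

/-- Iterated right shift `R_r = R_{r_1} ⋯ R_{r_d}` as a map `H_m → H_{m+d}`. -/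
def rshW (H : ∀ m, Submodule ℂ (TP n m)) (m : ℕ) :
    ∀ d, Wd n d → (TP n m →L[ℂ] TP n (m + d))
  | 0, _ => ContinuousLinearMap.id ℂ _
  | d + 1, r => rsh H (r (Fin.last d)) (m + d) ∘L rshW H m d (Fin.init r)

/-- Canonical unitary identification `H^{⊗a} = H^{⊗b}` for `a = b`. -/
def castTP {a b : ℕ} (h : a = b) : TP n a →L[ℂ] TP n b :=
  ofMatR (Matrix.of fun (w : Wd n b) (v : Wd n a) =>
    if (fun i => w (Fin.cast h i)) = v then 1 else 0)

/-- `S_s : H_m → H_l` for a word `s` of length `l - m`. -/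
def lshWTo (H : ∀ m, Submodule ℂ (TP n m)) (m l : ℕ) (h : m ≤ l) (s : Wd n (l - m)) :
    TP n m →L[ℂ] TP n l :=
  castTP (by omega : m + (l - m) = l) ∘L lshW H m (l - m) s

/-- `R_r : H_m → H_l` for a word `r` of length `l - m`. -/
def rshWTo (H : ∀ m, Submodule ℂ (TP n m)) (m l : ℕ) (h : m ≤ l) (r : Wd n (l - m)) :
    TP n m →L[ℂ] TP n l :=
  castTP (by omega : m + (l - m) = l) ∘L rshW H m (l - m) r

/-- Extension of an operator on `H_m` by zero to `H^{⊗m}`. -/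
def extOp (H : ∀ m, Submodule ℂ (TP n m)) {m : ℕ} (A : ↥(H m) →L[ℂ] ↥(H m)) :
    TP n m →L[ℂ] TP n m :=
  (H m).subtypeL ∘L A ∘L (H m).orthogonalProjectionOnto

/-- Compression of an operator on `H^{⊗m}` to `H_m`. -/
def cmpOp (H : ∀ m, Submodule ℂ (TP n m)) {m : ℕ} (T : TP n m →L[ℂ] TP n m) :
    ↥(H m) →L[ℂ] ↥(H m) :=
  (H m).orthogonalProjectionOnto ∘L T ∘L (H m).subtypeL

def tk {m l : ℕ} (h : m ≤ l) (w : Wd n l) : Wd n m := fun i => w (Fin.castLE h i)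
def dr (m : ℕ) {l : ℕ} (w : Wd n l) : Wd n (l - m) :=
  fun i => w ⟨m + i.1, by have := i.isLt; omega⟩

/-- `A ⊗ B` on `H^{⊗l} = H^{⊗m} ⊗ H^{⊗(l-m)}`. -/
def opTG {m l : ℕ} (h : m ≤ l) (A : TP n m →L[ℂ] TP n m)
    (B : TP n (l - m) →L[ℂ] TP n (l - m)) : TP n l →L[ℂ] TP n l :=
  ofMatR (Matrix.of fun w v => ent A (tk h w) (tk h v) * ent B (dr m w) (dr m v))

/-- The inductive-system map `ι_{m,l}(A) = p_l (A ⊗ 1) p_l : B(H_m) → B(H_l)`. -/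
def iota (H : ∀ m, Submodule ℂ (TP n m)) {m l : ℕ} (h : m ≤ l)
    (A : ↥(H m) →L[ℂ] ↥(H m)) : ↥(H l) →L[ℂ] ↥(H l) :=
  cmpOp H (opTG h (extOp H A) (ContinuousLinearMap.id ℂ (TP n (l - m))))

/-- The chirality-flipped inductive map `ῑ_{m,l}(A) = Σ_{|s|=l-m} S_s A S_s^* |_{H_l}`. -/
def iotabar (H : ∀ m, Submodule ℂ (TP n m)) {m l : ℕ} (h : m ≤ l)
    (A : ↥(H m) →L[ℂ] ↥(H m)) : ↥(H l) →L[ℂ] ↥(H l) :=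
  cmpOp H (∑ s : Wd n (l - m),
    lshWTo H m l h s ∘L extOp H A ∘L ContinuousLinearMap.adjoint (lshWTo H m l h s))

/-- The word `j` of length one. -/
def letter (j : Fin n) : Wd n 1 := fun _ => j

/-- `Q^{⊗m}` on `H^{⊗m}`. -/
def tpow (Q : TP n 1 →L[ℂ] TP n 1) (m : ℕ) : TP n m →L[ℂ] TP n m :=
  ofMatR (Matrix.of fun w v => ∏ i : Fin m, ent Q (letter (w i)) (letter (v i)))

/-- Diagonal entry `(Q^{⊗d})_{r,r}`. -/
def Qdg (Q : TP n 1 →L[ℂ] TP n 1) {d : ℕ} (r : Wd n d) : ℂ :=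
  ∏ i, ent Q (letter (r i)) (letter (r i))

/-- Trace of an operator. -/
def trOp {E : Type*} [NormedAddCommGroup E] [Module ℂ E] (A : E →L[ℂ] E) : ℂ :=
  LinearMap.trace ℂ E A.toLinearMap

/-- `Tr(Q_m)` where `Q_m = p_m Q^{⊗m} p_m ∈ B(H_m)`. -/
def trQ (H : ∀ m, Submodule ℂ (TP n m)) (Q : TP n 1 →L[ℂ] TP n 1) (m : ℕ) : ℂ :=
  trOp (cmpOp H (tpow Q m))

/-- The state `φ_m(A) = Tr(ρ^{(m)} A)`, `ρ^{(m)} = Q_m / Tr(Q_m)`. -/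
def phiSt (H : ∀ m, Submodule ℂ (TP n m)) (Q : TP n 1 →L[ℂ] TP n 1) (m : ℕ)
    (A : ↥(H m) →L[ℂ] ↥(H m)) : ℂ :=
  trOp (cmpOp H (tpow Q m) ∘L A) / trQ H Q m

/-- The projective-system map
`j_{l,m}(A) = (Tr Q_m / Tr Q_l) Σ_{|r|=l-m} (Q^{⊗(l-m)})_{r,r} R_r^* A R_r |_{H_m}`. -/
def jmap (H : ∀ m, Submodule ℂ (TP n m)) (Q : TP n 1 →L[ℂ] TP n 1) {m l : ℕ} (h : m ≤ l)
    (A : ↥(H l) →L[ℂ] ↥(H l)) : ↥(H m) →L[ℂ] ↥(H m) :=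
  (trQ H Q m / trQ H Q l) • cmpOp H (∑ r : Wd n (l - m),
    Qdg Q r • (ContinuousLinearMap.adjoint (rshWTo H m l h r) ∘L extOp H A ∘L rshWTo H m l h r))

/-- `ρ^{(m)} = Q_m / Tr(Q_m)`, extended by zero to `H^{⊗m}`. -/
def rhoExt (H : ∀ m, Submodule ℂ (TP n m)) (Q : TP n 1 →L[ℂ] TP n 1) (m : ℕ) :
    TP n m →L[ℂ] TP n m :=
  (trQ H Q m)⁻¹ • (prj H m ∘L tpow Q m ∘L prj H m)

/-- The normalization constant `√(Tr(Q_m)Tr(Q_k)/Tr(Q_{m+k}))`. -/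
def lamC (H : ∀ m, Submodule ℂ (TP n m)) (Q : TP n 1 →L[ℂ] TP n 1) (m k : ℕ) : ℂ :=
  (trQ H Q m * trQ H Q k / trQ H Q (m + k)) ^ ((1 : ℂ) / 2)

/-- Right tensoring `x ↦ x ⊗ y` as a continuous linear map. -/
def tensR {m k : ℕ} (y : TP n k) : TP n m →L[ℂ] TP n (m + k) :=
  ofMatR (Matrix.of fun w v => if wfst w = v then y (wsnd w) else 0)

/-- The map `V_{m,l} ψ = √(TrQ_m TrQ_{l-m}/TrQ_l) Σ_{|r|=l-m} p_l (R_r^* ψ ⊗ e_r)`,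
realized as an operator on `H^{⊗(m+k)}` (with `l = m + k`). -/
def Vml (H : ∀ m, Submodule ℂ (TP n m)) (Q : TP n 1 →L[ℂ] TP n 1) (m k : ℕ) :
    TP n (m + k) →L[ℂ] TP n (m + k) :=
  lamC H Q m k • ∑ r : Wd n k,
    prj H (m + k) ∘L tensR (EuclideanSpace.single r 1) ∘L
      ContinuousLinearMap.adjoint (rshW H m k r)

/-- The claimed adjoint `V_{m,l}^* = √(⋯) (ρ^{(l)})^{-1}(ρ^{(m)} ⊗ ρ^{(l-m)})`. -/
def VmlStar (H : ∀ m, Submodule ℂ (TP n m)) (Q : TP n 1 →L[ℂ] TP n 1) (m k : ℕ) :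
    TP n (m + k) →L[ℂ] TP n (m + k) :=
  lamC H Q m k •
    (extOp H (trQ H Q (m + k) • Ring.inverse (cmpOp H (tpow Q (m + k)))) ∘L
      opT (rhoExt H Q m) (rhoExt H Q k))

/-- The adjoint, with instances supplied explicitly. -/
def adjC {E F : Type*} [NormedAddCommGroup E] [NormedAddCommGroup F]
    [InnerProductSpace ℂ E] [InnerProductSpace ℂ F] [CompleteSpace E] [CompleteSpace F]
    (T : E →L[ℂ] F) : F →L[ℂ] E :=
  @ContinuousLinearMap.adjoint ℂ E F _ _ _ _ _ _ _ T

/-- Complete positivity of a map between operator algebras on Hilbert spaces: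
positive matrices over the domain are sent to positive matrices over the codomain.
(Here `Nᴴ` is written as the transpose of the entrywise adjoint.) -/
def IsCP {E F' : Type*} [NormedAddCommGroup E] [InnerProductSpace ℂ E] [CompleteSpace E]
    [NormedAddCommGroup F'] [InnerProductSpace ℂ F'] [CompleteSpace F']
    (Φ : (E →L[ℂ] E) → (F' →L[ℂ] F')) : Prop :=
  ∀ (d : ℕ) (M : Matrix (Fin d) (Fin d) (E →L[ℂ] E)),
    (∃ N : Matrix (Fin d) (Fin d) (E →L[ℂ] E), M = (N.map fun T => adjC T)ᵀ * N) →
    ∃ N' : Matrix (Fin d) (Fin d) (F' →L[ℂ] F'), M.map Φ = (N'.map fun T => adjC T)ᵀ * N'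

/-- The vacuum vector `Ω ∈ H^{⊗0} = ℂ`. -/
def vac (n : ℕ) : TP n 0 := EuclideanSpace.single default 1

/-- The symmetric subspace `H^{∨m} ⊆ H^{⊗m}`. -/
def symSub (n m : ℕ) : Submodule ℂ (TP n m) where
  carrier := {x | ∀ (σ : Equiv.Perm (Fin m)) (w : Wd n m), x (w ∘ σ) = x w}
  add_mem' := by
    intro a b ha hb σ w
    show (a + b) (w ∘ σ) = (a + b) w
    simp only [PiLp.add_apply, ha σ w, hb σ w]
  zero_mem' := by
    intro σ w
    show (0 : TP n m) (w ∘ σ) = (0 : TP n m) w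
    simp
  smul_mem' := by
    intro c x hx σ w
    show (c • x) (w ∘ σ) = (c • x) w
    simp only [PiLp.smul_apply, hx σ w]

/-- Rank-one operator `|x⟩⟨x|`. -/
def rankOne {F : Type*} [NormedAddCommGroup F] [InnerProductSpace ℂ F] (x : F) :
    F →L[ℂ] F :=
  (innerSL ℂ x).smulRight x

end

noncomputable section Helpers

open ContinuousLinearMap

variable {n : ℕ}

local notation "⟪" x ", " y "⟫" => inner (𝕜 := ℂ) x y

lemma ofMatR_apply {ι κ : Type} [Fintype ι] [Fintype κ] [DecidableEq ι] [DecidableEq κ]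
    (M : Matrix ι κ ℂ) (x : EuclideanSpace ℂ κ) (w : ι) :
    ofMatR M x w = ∑ v, M w v * x v := rfl

lemma lcreate_apply (j : Fin n) (b : ℕ) (x : TP n b) (w : Wd n (b + 1)) :
    lcreate j b x w = if w 0 = j then x (fun i => w i.succ) else 0 := by
  rw [lcreate, ofMatR_apply]
  simp only [Matrix.of_apply, ite_and]
  by_cases h : w 0 = j <;>
    simp [h, ite_mul, Finset.sum_ite_eq]

lemma rcreate_apply (k : Fin n) (b : ℕ) (x : TP n b) (w : Wd n (b + 1)) :
    rcreate k b x w = if w (Fin.last b) = k then x (fun i => w i.castSucc) else 0 := by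
  rw [rcreate, ofMatR_apply]
  simp only [Matrix.of_apply, ite_and]
  by_cases h : w (Fin.last b) = k <;>
    simp [h, ite_mul, Finset.sum_ite_eq]

lemma create_comm (j k : Fin n) (m : ℕ) (x : TP n m) :
    lcreate j (m + 1) (rcreate k m x) = rcreate k (m + 1) (lcreate j m x) := by
  ext w
  rw [lcreate_apply, rcreate_apply]
  rw [rcreate_apply, lcreate_apply]
  have h0 : ((0 : Fin (m + 1)).castSucc : Fin (m + 2)) = 0 := rfl
  have hL : ((Fin.last m).succ : Fin (m + 2)) = Fin.last (m + 1) := rfl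
  by_cases h1 : w 0 = j <;> by_cases h2 : w (Fin.last (m + 1)) = k <;>
    simp [h1, h2, h0, hL, -Fin.castSucc_succ, Fin.succ_castSucc]

/-- Reindexing along an equality of lengths. -/
def rx {a b : ℕ} (h : a = b) (x : TP n a) : TP n b :=
  (WithLp.equiv 2 _).symm fun w => x fun i => w (Fin.cast h i)

lemma rx_apply {a b : ℕ} (h : a = b) (x : TP n a) (w : Wd n b) :
    rx h x w = x fun i => w (Fin.cast h i) := rfl

lemma rx_rfl {a : ℕ} (x : TP n a) : rx (rfl : a = a) x = x := rfl

lemma rx_mem {a b : ℕ} (h : a = b) (H : ∀ m, Submodule ℂ (TP n m)) (x : TP n a)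
    (hx : x ∈ H a) : rx h x ∈ H b := by
  subst h; rwa [rx_rfl]

lemma inner_rx {a b : ℕ} (h : a = b) (z : TP n b) (x : TP n a) :
    ⟪z, rx h x⟫ = ⟪rx h.symm z, x⟫ := by
  subst h; rw [rx_rfl, rx_rfl]

lemma tmul_apply {a b : ℕ} (x : TP n a) (y : TP n b) (w : Wd n (a + b)) :
    tmul x y w = x (wfst w) * y (wsnd w) := rfl

lemma inner_tmul {a b : ℕ} (x u : TP n a) (y v : TP n b) :
    ⟪tmul x y, tmul u v⟫ = ⟪x, u⟫ * ⟪y, v⟫ := by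
  simp only [PiLp.inner_apply, RCLike.inner_apply]
  rw [Finset.sum_mul_sum,
    ← Equiv.sum_comp ((Equiv.sumArrowEquivProdArrow (Fin a) (Fin b) (Fin n)).symm.trans
      (Equiv.arrowCongr finSumFinEquiv (Equiv.refl (Fin n))))
      (fun w => tmul u v w * (starRingEnd ℂ) (tmul x y w)),
    Fintype.sum_prod_type]
  refine Finset.sum_congr rfl fun s _ => Finset.sum_congr rfl fun t _ => ?_
  have h1 : wfst (n := n) (Sum.elim s t ∘ finSumFinEquiv.symm) = s := by
    funext i; simp [wfst, Function.comp]
  have h2 : wsnd (n := n) (m := a) (Sum.elim s t ∘ finSumFinEquiv.symm) = t := by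
    funext i; simp [wsnd, Function.comp]
  show tmul u v (Sum.elim s t ∘ finSumFinEquiv.symm) *
      (starRingEnd ℂ) (tmul x y (Sum.elim s t ∘ finSumFinEquiv.symm)) =
    u s * (starRingEnd ℂ) (x s) * (v t * (starRingEnd ℂ) (y t))
  simp only [tmul_apply]
  rw [h1, h2]
  simp only [map_mul]
  ring

lemma rcreate_eq_tmul (k : Fin n) (b : ℕ) (x : TP n b) :
    rcreate k b x = tmul x (EuclideanSpace.single (letter k) (1 : ℂ)) := by
  ext w
  rw [rcreate_apply]
  have h1 : wfst (n := n) (m := b) (k := 1) w = fun i => w i.castSucc := rfl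
  have h2 : wsnd (n := n) (m := b) (k := 1) w = letter (w (Fin.last b)) := by
    funext i
    have : i = 0 := Subsingleton.elim _ _
    subst this
    simp [wsnd, letter, Fin.last, Fin.natAdd]
  rw [tmul_apply, h1, h2, EuclideanSpace.single_apply]
  have h3 : (letter (w (Fin.last b)) = letter k) ↔ w (Fin.last b) = k := by
    constructor
    · intro h; exact congrFun h 0
    · intro h; rw [h]
  by_cases h : w (Fin.last b) = k <;> simp [h, h3]

lemma lcreate_eq_tmul (j : Fin n) (b : ℕ) (x : TP n b) :
    lcreate j b x =
      rx (Nat.add_comm 1 b) (tmul (EuclideanSpace.single (letter j) (1 : ℂ)) x) := by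
  ext w
  rw [lcreate_apply, rx_apply]
  set w' : Wd n (1 + b) := fun i => w (Fin.cast (Nat.add_comm 1 b) i) with hw'
  have h1 : wfst (n := n) (m := 1) (k := b) w' = letter (w 0) := by
    funext i
    have : i = 0 := Subsingleton.elim _ _
    subst this
    have : (Fin.cast (Nat.add_comm 1 b) (Fin.castAdd b (0 : Fin 1))) = (0 : Fin (b + 1)) := rfl
    simp [wfst, hw', this, letter]
  have h2 : wsnd (n := n) (m := 1) (k := b) w' = fun i => w i.succ := by
    funext i
    have : (Fin.cast (Nat.add_comm 1 b) (Fin.natAdd 1 i)) = i.succ := by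
      apply Fin.ext; simp [Nat.add_comm]
    simp [wsnd, hw', this]
  rw [tmul_apply, h1, h2, EuclideanSpace.single_apply]
  have h3 : (letter (w 0) = letter j) ↔ w 0 = j := by
    constructor
    · intro h; exact congrFun h 0
    · intro h; rw [h]
  by_cases h : w 0 = j <;> simp [h, h3]

lemma mem_orth_rcreate (H : ∀ m, Submodule ℂ (TP n m)) (hsp : IsSubproduct H)
    (k : Fin n) (b : ℕ) (ξ : TP n b) (hξ : ξ ∈ (H b)ᗮ) :
    rcreate k b ξ ∈ (H (b + 1))ᗮ := by
  rw [Submodule.mem_orthogonal]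
  intro z hz
  have hz2 : z ∈ tensorSub (H b) (H 1) := hsp.2 b 1 hz
  rw [rcreate_eq_tmul]
  refine Submodule.span_induction ?_ ?_ ?_ ?_ hz2
  · rintro _ ⟨u, hu, v, hv, rfl⟩
    rw [inner_tmul]
    have : ⟪u, ξ⟫ = 0 := (Submodule.mem_orthogonal _ _).mp hξ u hu
    rw [this, zero_mul]
  · simp
  · intro a b _ _ ha hb; rw [inner_add_left, ha, hb, add_zero]
  · intro c a _ ha; rw [inner_smul_left, ha, mul_zero]

lemma mem_orth_lcreate (H : ∀ m, Submodule ℂ (TP n m)) (hsp : IsSubproduct H)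
    (j : Fin n) (b : ℕ) (ξ : TP n b) (hξ : ξ ∈ (H b)ᗮ) :
    lcreate j b ξ ∈ (H (b + 1))ᗮ := by
  rw [Submodule.mem_orthogonal]
  intro z hz
  have hz' : rx (Nat.add_comm b 1) z ∈ H (1 + b) := rx_mem _ H z hz
  have hz2 : rx (Nat.add_comm b 1) z ∈ tensorSub (H 1) (H b) := hsp.2 1 b hz'
  rw [lcreate_eq_tmul, inner_rx]
  have hss : (Nat.add_comm 1 b).symm = Nat.add_comm b 1 := rfl
  rw [hss]
  refine Submodule.span_induction (p := fun z' _ =>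
      ⟪z', tmul (EuclideanSpace.single (letter j) (1 : ℂ)) ξ⟫ = 0) ?_ ?_ ?_ ?_ hz2
  · rintro _ ⟨u, hu, v, hv, rfl⟩
    rw [inner_tmul]
    have : ⟪v, ξ⟫ = 0 := (Submodule.mem_orthogonal _ _).mp hξ v hv
    rw [this, mul_zero]
  · simp
  · intro a b _ _ ha hb; rw [inner_add_left, ha, hb, add_zero]
  · intro c a _ ha; rw [inner_smul_left, ha, mul_zero]

lemma prj_apply_mem (H : ∀ m, Submodule ℂ (TP n m)) {c : ℕ} (x : TP n c) (hx : x ∈ H c) :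
    prj H c x = x :=
  congrArg Subtype.val
    (Submodule.orthogonalProjectionOnto_mem_subspace_eq_self (K := H c) ⟨x, hx⟩)

lemma prj_apply_orth (H : ∀ m, Submodule ℂ (TP n m)) {c : ℕ} (x : TP n c) (hx : x ∈ (H c)ᗮ) :
    prj H c x = 0 := by
  show (((H c).orthogonalProjectionOnto) x : TP n c) = 0
  rw [Submodule.orthogonalProjectionOnto_apply_of_mem_orthogonal hx]
  rfl

lemma prj_idem (H : ∀ m, Submodule ℂ (TP n m)) (c : ℕ) :
    prj H c ∘L prj H c = prj H c := by
  refine ContinuousLinearMap.ext fun x => ?_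
  exact prj_apply_mem H _ (Submodule.coe_mem _)

lemma key_l (H : ∀ m, Submodule ℂ (TP n m)) (hsp : IsSubproduct H) (j : Fin n) (b : ℕ) :
    prj H (b + 1) ∘L lcreate j b ∘L prj H b = prj H (b + 1) ∘L lcreate j b := by
  refine ContinuousLinearMap.ext fun x => ?_
  simp only [ContinuousLinearMap.comp_apply]
  have hdiff : x - prj H b x ∈ (H b)ᗮ := by
    exact Submodule.sub_starProjection_mem_orthogonal (K := H b) x
  have h0 : prj H (b + 1) (lcreate j b (x - prj H b x)) = 0 :=
    prj_apply_orth H _ (mem_orth_lcreate H hsp j b _ hdiff)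
  rw [map_sub, map_sub] at h0
  have := sub_eq_zero.mp h0
  exact this.symm

lemma key_r (H : ∀ m, Submodule ℂ (TP n m)) (hsp : IsSubproduct H) (k : Fin n) (b : ℕ) :
    prj H (b + 1) ∘L rcreate k b ∘L prj H b = prj H (b + 1) ∘L rcreate k b := by
  refine ContinuousLinearMap.ext fun x => ?_
  simp only [ContinuousLinearMap.comp_apply]
  have hdiff : x - prj H b x ∈ (H b)ᗮ := by
    exact Submodule.sub_starProjection_mem_orthogonal (K := H b) x
  have h0 : prj H (b + 1) (rcreate k b (x - prj H b x)) = 0 :=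
    prj_apply_orth H _ (mem_orth_rcreate H hsp k b _ hdiff)
  rw [map_sub, map_sub] at h0
  have := sub_eq_zero.mp h0
  exact this.symm

end Helpers

/-- **Statement 6.** The left and right shifts satisfy `[S_j, R_k] = 0` and
`[S_j^*, R_k^*] = 0`. -/
theorem stmt6 {n : ℕ} (H : ∀ m, Submodule ℂ (TP n m)) (hsp : IsSubproduct H)
    (j k : Fin n) (m : ℕ) :
    lsh H j (m + 1) ∘L rsh H k m = rsh H k (m + 1) ∘L lsh H j m ∧
    ContinuousLinearMap.adjoint (rsh H k m) ∘L ContinuousLinearMap.adjoint (lsh H j (m + 1)) =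
      ContinuousLinearMap.adjoint (lsh H j m) ∘L ContinuousLinearMap.adjoint (rsh H k (m + 1)) := by
  have main : lsh H j (m + 1) ∘L rsh H k m = rsh H k (m + 1) ∘L lsh H j m := by
    unfold lsh rsh
    refine ContinuousLinearMap.ext fun x => ?_
    simp only [ContinuousLinearMap.comp_apply]
    have e1 : prj H (m + 1) (prj H (m + 1) (rcreate k m (prj H m x))) =
        prj H (m + 1) (rcreate k m (prj H m x)) :=
      congrFun (congrArg DFunLike.coe (prj_idem H (m + 1))) _
    rw [e1]
    have e2 := congrFun (congrArg DFunLike.coe (key_l H hsp j (m + 1)))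
      (rcreate k m (prj H m x))
    simp only [ContinuousLinearMap.comp_apply] at e2
    rw [e2, create_comm]
    have e3 := congrFun (congrArg DFunLike.coe (key_r H hsp k (m + 1)))
      (lcreate j m (prj H m x))
    simp only [ContinuousLinearMap.comp_apply] at e3
    have e1' : prj H (m + 1) (prj H (m + 1) (lcreate j m (prj H m x))) =
        prj H (m + 1) (lcreate j m (prj H m x)) :=
      congrFun (congrArg DFunLike.coe (prj_idem H (m + 1))) _
    rw [e1', e3]
  refine ⟨main, ?_⟩
  have := congrArg ContinuousLinearMap.adjoint main
  rwa [ContinuousLinearMap.adjoint_comp, ContinuousLinearMap.adjoint_comp] at this
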